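/- (Differentiation under the Jackson–Nörlund integral) Let s ∈ I with s ≠ ω₀, let θ₀ ∈ ℝ, ε̄ > 0, and let g : [s]_{q,ω} × (θ₀ − ε̄, θ₀ + ε̄) → ℝ. Assume: (i) g(t,·) is differentiable at θ₀ uniformly in t ∈ [s]_{q,ω}; (ii) G(θ) := ∫_{ω₀}^{s} g(t,θ) d_{q,ω}t exists for all θ in a neighbourhood of θ₀; (iii) ∫_{ω₀}^{s} ∂₂g(t,θ₀) d_{q,ω}t exists. Then G is differentiable at θ₀ and G′(θ₀) = ∫_{ω₀}^{s} ∂₂g(t,θ₀) d_{q,ω}t. -/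

import Mathlib

open Filter Topology

noncomputable section

/-- The fixed point `ω₀ := ω/(1-q)` of `t ↦ qt + ω`. -/
def hahnOmega0 (q ω : ℝ) : ℝ := ω / (1 - q)

/-- The Hahn difference operator `D_{q,ω}`:
`D_{q,ω}f(t) = (f(qt+ω) - f t)/((qt+ω) - t)` for `t ≠ ω₀`, and the ordinary
derivative at `t = ω₀`. -/
def hahnDeriv (q ω : ℝ) (f : ℝ → ℝ) (t : ℝ) : ℝ :=
  if t = hahnOmega0 q ω then deriv f t
  else (f (q * t + ω) - f t) / ((q * t + ω) - t)

/-- `f` is `q,ω`-differentiable at `t` (automatic off `ω₀`; at `ω₀` it means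
ordinary (Fréchet) differentiability). -/
def HahnDiffAt (q ω : ℝ) (f : ℝ → ℝ) (t : ℝ) : Prop :=
  t = hahnOmega0 q ω → DifferentiableAt ℝ f t

/-- The point `x q^k + [k]_{q,ω}` where `[k]_{q,ω} = ω(1-q^k)/(1-q)`. -/
def jnPoint (q ω x : ℝ) (k : ℕ) : ℝ := x * q ^ k + ω * (1 - q ^ k) / (1 - q)

/-- Partial sums of the Jackson–Nörlund series at `x`. -/
def jnPartial (q ω : ℝ) (f : ℝ → ℝ) (x : ℝ) (n : ℕ) : ℝ :=
  ∑ k ∈ Finset.range n, q ^ k * f (jnPoint q ω x k)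

/-- Convergence of the Jackson–Nörlund series `Σ q^k f(x q^k + [k]_{q,ω})`. -/
def JNConvergesAt (q ω : ℝ) (f : ℝ → ℝ) (x : ℝ) : Prop :=
  ∃ S : ℝ, Tendsto (jnPartial q ω f x) atTop (𝓝 S)

/-- The Jackson–Nörlund integral `∫_{ω₀}^{x} f(t) d_{q,ω}t`. -/
def jnSum (q ω : ℝ) (f : ℝ → ℝ) (x : ℝ) : ℝ :=
  (x * (1 - q) - ω) * limUnder atTop (jnPartial q ω f x)

/-- The Jackson–Nörlund integral `∫_{a}^{b} f(t) d_{q,ω}t`. -/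
def jnIntegral (q ω : ℝ) (f : ℝ → ℝ) (a b : ℝ) : ℝ :=
  jnSum q ω f b - jnSum q ω f a

/-- The orbit `{q^n s + [n]_{q,ω} : n ∈ ℕ}`. -/
def qwOrbit (q ω s : ℝ) : Set ℝ := Set.range (jnPoint q ω s)

/-- The orbit together with `ω₀`, i.e. `[s]_{q,ω}`. -/
def qwClosedOrbit (q ω s : ℝ) : Set ℝ := qwOrbit q ω s ∪ {hahnOmega0 q ω}

/-- The `q,ω`-interval `[a,b]_{q,ω}`. -/
def qwInterval (q ω a b : ℝ) : Set ℝ :=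
  qwOrbit q ω a ∪ qwOrbit q ω b ∪ {hahnOmega0 q ω}

/-- `g(t,·)` is differentiable at `θ₀`, uniformly in `t ∈ S`, with
partial derivative `g' t = ∂₂g(t,θ₀)`. -/
def UnifDiffAt (g : ℝ → ℝ → ℝ) (S : Set ℝ) (θ₀ : ℝ) (g' : ℝ → ℝ) : Prop :=
  (∀ t ∈ S, HasDerivAt (g t) (g' t) θ₀) ∧
  ∀ ε > 0, ∃ δ > 0, ∀ θ : ℝ, 0 < |θ - θ₀| → |θ - θ₀| < δ →
    ∀ t ∈ S, |(g t θ - g t θ₀) / (θ - θ₀) - g' t| < ε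

/-- differentiation under the Jackson–Nörlund integral sign. -/
theorem jn_deriv_under_integral (q ω : ℝ) (hq0 : 0 < q) (hq1 : q < 1)
    (hω : 0 < ω) (I : Set ℝ) (hI : I.OrdConnected) (hmem : hahnOmega0 q ω ∈ I)
    (s : ℝ) (hs : s ∈ I) (hsne : s ≠ hahnOmega0 q ω)
    (θ₀ εbar : ℝ) (hεbar : 0 < εbar) (g : ℝ → ℝ → ℝ) (g' : ℝ → ℝ)
    (hunif : UnifDiffAt g (qwClosedOrbit q ω s) θ₀ g')
    (hG : ∃ δ > 0, ∀ θ : ℝ, |θ - θ₀| < δ →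
        JNConvergesAt q ω (fun t => g t θ) s)
    (hg' : JNConvergesAt q ω g' s) :
    HasDerivAt (fun θ => jnSum q ω (fun t => g t θ) s) (jnSum q ω g' s) θ₀ := by
  obtain ⟨hderiv, hunif2⟩ := hunif
  obtain ⟨δG, hδG, hGconv⟩ := hG
  have h1q : 0 < 1 - q := by linarith
  set c := s * (1 - q) - ω with hc
  have hS : ∀ θ, |θ - θ₀| < δG → Tendsto (jnPartial q ω (fun t => g t θ) s) atTop
      (𝓝 (limUnder atTop (jnPartial q ω (fun t => g t θ) s))) := by
    intro θ hθ
    obtain ⟨S, hSt⟩ := hGconv θ hθ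
    rwa [hSt.limUnder_eq]
  obtain ⟨L, hL⟩ := hg'
  have hLe : limUnder atTop (jnPartial q ω g' s) = L := hL.limUnder_eq
  rw [hasDerivAt_iff_tendsto_slope]
  rw [Metric.tendsto_nhdsWithin_nhds]
  intro ε hε
  have hε'pos : 0 < ε * (1 - q) / (2 * (|c| + 1)) := by positivity
  obtain ⟨δ, hδ, hub⟩ := hunif2 (ε * (1 - q) / (2 * (|c| + 1))) hε'pos
  refine ⟨min δ δG, lt_min hδ hδG, ?_⟩
  intro θ hθne hθd
  rw [Real.dist_eq] at hθd ⊢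
  set ε' := ε * (1 - q) / (2 * (|c| + 1)) with hε'
  have hθδ : |θ - θ₀| < δ := lt_of_lt_of_le hθd (min_le_left _ _)
  have hθG : |θ - θ₀| < δG := lt_of_lt_of_le hθd (min_le_right _ _)
  have hθ0 : 0 < |θ - θ₀| := abs_pos.mpr (sub_ne_zero.mpr hθne)
  -- key bound on partial sums
  have key : ∀ n, |(jnPartial q ω (fun t => g t θ) s n
        - jnPartial q ω (fun t => g t θ₀) s n) / (θ - θ₀)
        - jnPartial q ω g' s n| ≤ ε' / (1 - q) := by
    intro n
    have heq : (jnPartial q ω (fun t => g t θ) s n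
        - jnPartial q ω (fun t => g t θ₀) s n) / (θ - θ₀)
        - jnPartial q ω g' s n
        = ∑ k ∈ Finset.range n, q ^ k *
          ((g (jnPoint q ω s k) θ - g (jnPoint q ω s k) θ₀) / (θ - θ₀)
            - g' (jnPoint q ω s k)) := by
      simp only [jnPartial]
      rw [← Finset.sum_sub_distrib, Finset.sum_div, ← Finset.sum_sub_distrib]
      exact Finset.sum_congr rfl fun k _ => by ring
    rw [heq]
    have hterm : ∀ k ∈ Finset.range n, |q ^ k *
          ((g (jnPoint q ω s k) θ - g (jnPoint q ω s k) θ₀) / (θ - θ₀)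
            - g' (jnPoint q ω s k))| ≤ q ^ k * ε' := by
      intro k _
      rw [abs_mul, abs_pow, abs_of_pos hq0]
      have hmem : jnPoint q ω s k ∈ qwClosedOrbit q ω s :=
        Or.inl ⟨k, rfl⟩
      have := hub θ hθ0 hθδ (jnPoint q ω s k) hmem
      exact mul_le_mul_of_nonneg_left this.le (by positivity)
    calc |∑ k ∈ Finset.range n, q ^ k *
          ((g (jnPoint q ω s k) θ - g (jnPoint q ω s k) θ₀) / (θ - θ₀)
            - g' (jnPoint q ω s k))|
        ≤ ∑ k ∈ Finset.range n, q ^ k * ε' :=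
          (Finset.abs_sum_le_sum_abs _ _).trans (Finset.sum_le_sum hterm)
      _ = (∑ k ∈ Finset.range n, q ^ k) * ε' := by rw [Finset.sum_mul]
      _ ≤ (1 / (1 - q)) * ε' := by
          apply mul_le_mul_of_nonneg_right _ hε'pos.le
          rw [le_div_iff₀ h1q]
          have hgm : (∑ i ∈ Finset.range n, q ^ i) * (q - 1) = q ^ n - 1 :=
            geom_sum_mul q n
          have hqn : (0:ℝ) ≤ q ^ n := by positivity
          nlinarith
      _ = ε' / (1 - q) := by ring
  -- pass to the limit
  have hten : Tendsto (fun n => (jnPartial q ω (fun t => g t θ) s n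
        - jnPartial q ω (fun t => g t θ₀) s n) / (θ - θ₀)
        - jnPartial q ω g' s n) atTop
      (𝓝 ((limUnder atTop (jnPartial q ω (fun t => g t θ) s)
        - limUnder atTop (jnPartial q ω (fun t => g t θ₀) s)) / (θ - θ₀) - L)) := by
    exact (((hS θ hθG).sub (hS θ₀ (by simpa using hδG))).div_const _).sub
      (hLe ▸ hL)
  have habs : |(limUnder atTop (jnPartial q ω (fun t => g t θ) s)
        - limUnder atTop (jnPartial q ω (fun t => g t θ₀) s)) / (θ - θ₀) - L|
        ≤ ε' / (1 - q) :=
    le_of_tendsto hten.abs (Filter.Eventually.of_forall key)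
  have hslope : slope (fun θ => jnSum q ω (fun t => g t θ) s) θ₀ θ
      - jnSum q ω g' s
      = c * ((limUnder atTop (jnPartial q ω (fun t => g t θ) s)
        - limUnder atTop (jnPartial q ω (fun t => g t θ₀) s)) / (θ - θ₀) - L) := by
    rw [slope_def_field, jnSum, jnSum, jnSum, hLe]
    have hne : θ - θ₀ ≠ 0 := sub_ne_zero.mpr hθne
    field_simp
    ring
  rw [hslope, abs_mul]
  calc |c| * |(limUnder atTop (jnPartial q ω (fun t => g t θ) s)
        - limUnder atTop (jnPartial q ω (fun t => g t θ₀) s)) / (θ - θ₀) - L|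
      ≤ |c| * (ε' / (1 - q)) := mul_le_mul_of_nonneg_left habs (abs_nonneg _)
    _ = ε * (|c| / (2 * (|c| + 1))) := by
        rw [hε']; field_simp
    _ < ε := by
        have h1 : |c| / (2 * (|c| + 1)) < 1 := by
          rw [div_lt_one (by positivity)]
          have := abs_nonneg c; linarith
        nlinarith
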